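/- For the Vietoris–Rips filtration function there exists a constant C > 0 such that λ^{dr}({x ∈ M^r : ρ(x) ≤ t}) ≤ C·t for all t ∈ [0,1]; i.e., the sublevel-set measure bound holds with exponent α = 1. -/

import Mathlib

open MeasureTheory

noncomputable section

/-- The `i`-th block (point) of a configuration of `r` points in `ℝ^d`. -/
def blk {d r : ℕ} (x : EuclideanSpace ℝ (Fin r × Fin d)) (i : Fin r) :
    EuclideanSpace ℝ (Fin d) :=
  WithLp.toLp 2 (fun j => x (i, j))

/-- The set `M^r` of configurations all of whose points lie in `M`. -/
def confSet {d : ℕ} (M : Set (EuclideanSpace ℝ (Fin d))) (r : ℕ) :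
    Set (EuclideanSpace ℝ (Fin r × Fin d)) :=
  {x | ∀ i, blk x i ∈ M}

/-- The stability radius `ρ(x)`. -/
def rho {d r : ℕ} (M : Set (EuclideanSpace ℝ (Fin d)))
    (φ : Finset (Fin r) → EuclideanSpace ℝ (Fin r × Fin d) → ℝ)
    (x : EuclideanSpace ℝ (Fin r × Fin d)) : ℝ :=
  sSup {ε : ℝ | 0 ≤ ε ∧ ∀ y ∈ confSet M r,
    (∀ i, ‖blk y i - blk x i‖ ≤ ε) →
    ∀ J J' : Finset (Fin r), J.Nonempty → J'.Nonempty →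
      φ J x < φ J' x → φ J y < φ J' y}

/-- The Vietoris–Rips filtration function `φ[J](x) = max_{i,j ∈ J} ‖x_i − x_j‖`. -/
def vietorisRips {d r : ℕ} (J : Finset (Fin r))
    (x : EuclideanSpace ℝ (Fin r × Fin d)) : ℝ :=
  (((J ×ˢ J).sup fun p => ‖blk x p.1 - blk x p.2‖₊ : NNReal) : ℝ)

end

section Aux

variable {d r : ℕ}

lemma vr_le {J : Finset (Fin r)} {a b : Fin r} (ha : a ∈ J) (hb : b ∈ J)
    (x : EuclideanSpace ℝ (Fin r × Fin d)) :
    ‖blk x a - blk x b‖ ≤ vietorisRips J x := by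
  have h : (‖blk x a - blk x b‖₊ : NNReal) ≤ (J ×ˢ J).sup fun p => ‖blk x p.1 - blk x p.2‖₊ :=
    Finset.le_sup (b := ((a, b) : Fin r × Fin r))
      (f := fun p : Fin r × Fin r => ‖blk x p.1 - blk x p.2‖₊)
      (Finset.mem_product.2 ⟨ha, hb⟩)
  calc ‖blk x a - blk x b‖ = ((‖blk x a - blk x b‖₊ : NNReal) : ℝ) := (coe_nnnorm _).symm
    _ ≤ _ := NNReal.coe_le_coe.2 h

lemma vr_exists {J : Finset (Fin r)} (hJ : J.Nonempty)
    (x : EuclideanSpace ℝ (Fin r × Fin d)) :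
    ∃ a ∈ J, ∃ b ∈ J, vietorisRips J x = ‖blk x a - blk x b‖ := by
  obtain ⟨p, hp, hsup⟩ := Finset.exists_mem_eq_sup (J ×ˢ J) (hJ.product hJ)
    (fun p => ‖blk x p.1 - blk x p.2‖₊)
  rcases Finset.mem_product.1 hp with ⟨h1, h2⟩
  exact ⟨p.1, h1, p.2, h2, by simp [vietorisRips, hsup]⟩

lemma vr_pert {x y : EuclideanSpace ℝ (Fin r × Fin d)} {ε : ℝ}
    (h : ∀ i, ‖blk y i - blk x i‖ ≤ ε) {J : Finset (Fin r)} (hJ : J.Nonempty) :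
    vietorisRips J y ≤ vietorisRips J x + 2 * ε := by
  obtain ⟨a, ha, b, hb, hab⟩ := vr_exists hJ y
  rw [hab]
  have t1 : ‖blk y a - blk y b‖ ≤ ‖blk y a - blk x a‖ + ‖blk x a - blk y b‖ :=
    norm_sub_le_norm_sub_add_norm_sub _ _ _
  have t2 : ‖blk x a - blk y b‖ ≤ ‖blk x a - blk x b‖ + ‖blk x b - blk y b‖ :=
    norm_sub_le_norm_sub_add_norm_sub _ _ _
  have t3 : ‖blk x b - blk y b‖ = ‖blk y b - blk x b‖ := norm_sub_rev _ _
  have t4 : ‖blk x a - blk x b‖ ≤ vietorisRips J x := vr_le ha hb x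
  have := h a; have := h b
  linarith

lemma pow_sub_pow_le_lin {A : ℝ} : ∀ (n : ℕ) {a b : ℝ}, 0 ≤ b → b ≤ a → a ≤ A →
    a ^ n - b ^ n ≤ n * A ^ (n - 1) * (a - b) := by
  intro n
  induction n with
  | zero => intro a b _ _ _; simp
  | succ n ih =>
    intro a b hb hba haA
    have hA : 0 ≤ A := le_trans hb (le_trans hba haA)
    have ha : 0 ≤ a := le_trans hb hba
    have key : a ^ (n+1) - b ^ (n+1) = a * (a ^ n - b ^ n) + (a - b) * b ^ n := by ring
    have h1 : a * (a ^ n - b ^ n) ≤ A * (n * A ^ (n - 1) * (a - b)) := by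
      have hnn : 0 ≤ a ^ n - b ^ n := by
        have := pow_le_pow_left₀ hb hba n
        linarith
      calc a * (a ^ n - b ^ n) ≤ A * (a ^ n - b ^ n) := by nlinarith
        _ ≤ A * (n * A ^ (n - 1) * (a - b)) := by
            exact mul_le_mul_of_nonneg_left (ih hb hba haA) hA
    have h2 : A * (↑n * A ^ (n - 1) * (a - b)) ≤ n * A ^ n * (a - b) := by
      rcases Nat.eq_zero_or_pos n with h | h
      · subst h; simp
      · have hAA : A * A ^ (n - 1) = A ^ n := by
          rw [← pow_succ']
          congr 1
          omega
        refine le_of_eq ?_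
        calc A * (↑n * A ^ (n - 1) * (a - b)) = ↑n * (A * A ^ (n-1)) * (a - b) := by ring
          _ = ↑n * A ^ n * (a - b) := by rw [hAA]
    have h3 : (a - b) * b ^ n ≤ (a - b) * A ^ n := by
      have := pow_le_pow_left₀ hb (le_trans hba haA) n
      nlinarith
    have : (n : ℝ) * A ^ n * (a - b) + (a - b) * A ^ n = (↑n + 1) * A ^ n * (a - b) := by ring
    push_cast
    linarith

end Aux

section Aux2

lemma coord_abs_le_norm {d : ℕ} (v : EuclideanSpace ℝ (Fin d)) (j : Fin d) :
    |v j| ≤ ‖v‖ := by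
  rw [EuclideanSpace.norm_eq]
  have h1 : |v j| = Real.sqrt (‖v j‖ ^ 2) := by
    rw [Real.sqrt_sq_eq_abs, Real.norm_eq_abs, abs_abs]
  rw [h1]
  apply Real.sqrt_le_sqrt
  apply Finset.single_le_sum (f := fun i => ‖v i‖ ^ 2)
  · intro i _; positivity
  · exact Finset.mem_univ j

lemma norm_le_of_coord {d : ℕ} (hd : 1 ≤ d) {B : ℝ} (hB : 0 ≤ B)
    {v : EuclideanSpace ℝ (Fin d)} (h : ∀ j, |v j| ≤ B) : ‖v‖ ≤ d * B := by
  rw [EuclideanSpace.norm_eq]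
  have h1 : ∑ i, ‖v i‖ ^ 2 ≤ (d : ℝ) * B ^ 2 := by
    calc ∑ i, ‖v i‖ ^ 2 ≤ ∑ _i : Fin d, B ^ 2 := by
          apply Finset.sum_le_sum
          intro i _
          have := h i
          rw [Real.norm_eq_abs]
          nlinarith [abs_nonneg (v i)]
      _ = (d : ℝ) * B ^ 2 := by simp [Finset.sum_const, Finset.card_univ]
  have h2 : (d : ℝ) * B ^ 2 ≤ ((d : ℝ) * B) ^ 2 := by
    have hd1 : (1 : ℝ) ≤ (d : ℝ) := by exact_mod_cast hd
    nlinarith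
  calc Real.sqrt (∑ i, ‖v i‖ ^ 2) ≤ Real.sqrt (((d : ℝ) * B) ^ 2) :=
        Real.sqrt_le_sqrt (h1.trans h2)
    _ = (d : ℝ) * B := by
        rw [Real.sqrt_sq_eq_abs, abs_of_nonneg (by positivity)]

lemma annulus_vol {d : ℕ} (hd : 1 ≤ d) (c : EuclideanSpace ℝ (Fin d)) {R s : ℝ}
    (hR : 0 ≤ R) (hs : R ≤ s) :
    volume (Metric.closedBall c s \ Metric.ball c R) ≤
      ENNReal.ofReal (s ^ d - R ^ d) *
        volume (Metric.ball (0 : EuclideanSpace ℝ (Fin d)) 1) := by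
  have hsub : Metric.ball c R ⊆ Metric.closedBall c s :=
    Metric.ball_subset_closedBall.trans (Metric.closedBall_subset_closedBall hs)
  haveI : Nontrivial (EuclideanSpace ℝ (Fin d)) := by
    refine ⟨EuclideanSpace.single ⟨0, hd⟩ 1, 0, fun h => ?_⟩
    have := congrArg (fun v : EuclideanSpace ℝ (Fin d) => v ⟨0, hd⟩) h
    simp [EuclideanSpace.single_apply] at this
  rw [measure_diff hsub measurableSet_ball.nullMeasurableSet measure_ball_lt_top.ne]
  rw [Measure.addHaar_closedBall volume c (hR.trans hs), Measure.addHaar_ball volume c hR,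
    finrank_euclideanSpace_fin]
  apply tsub_le_iff_right.2
  rw [← add_mul, ← ENNReal.ofReal_add (sub_nonneg.2 (pow_le_pow_left₀ hR hs d))
    (pow_nonneg hR d), sub_add_cancel]

lemma measurable_blk {d r : ℕ} (i : Fin r) :
    Measurable (fun x : EuclideanSpace ℝ (Fin r × Fin d) => blk x i) :=
  (MeasurableEquiv.toLp 2 (Fin d → ℝ)).measurable.comp (measurable_pi_lambda _ (fun j =>
    (measurable_pi_apply (i, j)).comp (MeasurableEquiv.toLp 2 (Fin r × Fin d → ℝ)).symm.measurable))

end Aux2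

section Core

open Metric

lemma quad_vol {d r : ℕ} (hd : 1 ≤ d) {B t : ℝ} (hB : 1 ≤ B) (ht : 0 ≤ t) (ht1 : t ≤ 1)
    (i j k l : Fin r) (hlk : l ≠ k) (hli : l ≠ i) (hlj : l ≠ j) :
    volume {x : EuclideanSpace ℝ (Fin r × Fin d) | (∀ q, |x q| ≤ B) ∧
        ‖blk x i - blk x j‖ ≤ ‖blk x k - blk x l‖ ∧
        ‖blk x k - blk x l‖ ≤ ‖blk x i - blk x j‖ + 4 * t} ≤
      ENNReal.ofReal ((2 * B) ^ (r * d)) *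
        (ENNReal.ofReal ((d : ℝ) * (2 * d * B + 4) ^ (d - 1) * (4 * t)) *
          volume (Metric.ball (0 : EuclideanSpace ℝ (Fin d)) 1)) := by
  classical
  set ι := (Fin r × Fin d)
  set p : ι → Prop := fun q => q.1 = l with hp
  set S : Set (EuclideanSpace ℝ ι) := {x | (∀ q, |x q| ≤ B) ∧
        ‖blk x i - blk x j‖ ≤ ‖blk x k - blk x l‖ ∧
        ‖blk x k - blk x l‖ ≤ ‖blk x i - blk x j‖ + 4 * t} with hSdef
  -- measurability
  have hmblk : ∀ m n : Fin r, Measurable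
      (fun x : EuclideanSpace ℝ ι => ‖blk x m - blk x n‖) := fun m n =>
    ((measurable_blk m).sub (measurable_blk n)).norm
  have hcoord : ∀ q : ι, Measurable (fun x : EuclideanSpace ℝ ι => x q) := fun q =>
    (measurable_pi_apply q).comp (MeasurableEquiv.toLp 2 (ι → ℝ)).symm.measurable
  have hS : MeasurableSet S := by
    refine MeasurableSet.inter ?_ (MeasurableSet.inter ?_ ?_)
    · show MeasurableSet {x : EuclideanSpace ℝ ι | ∀ q, |x q| ≤ B}
      rw [Set.setOf_forall]
      exact MeasurableSet.iInter fun q =>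
        measurableSet_le (hcoord q).abs measurable_const
    · exact measurableSet_le (hmblk i j) (hmblk k l)
    · exact measurableSet_le (hmblk k l) ((hmblk i j).add_const _)
  -- the measure-preserving splitting
  set T := (MeasurableEquiv.toLp 2 (ι → ℝ)).symm.trans
      (MeasurableEquiv.piEquivPiSubtypeProd (fun _ : ι => ℝ) p) with hT
  have hMP : MeasureTheory.MeasurePreserving T volume volume :=
    (MeasureTheory.volume_preserving_piEquivPiSubtypeProd (fun _ : ι => ℝ) p).comp
      (EuclideanSpace.volume_preserving_symm_measurableEquiv_toLp ι)
  have hvol : volume S = volume (⇑T.symm ⁻¹' S) :=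
    ((hMP.symm T).measure_preimage hS.nullMeasurableSet).symm
  -- value of T.symm
  have hTval : ∀ (a : {q : ι // p q} → ℝ) (y : {q : ι // ¬ p q} → ℝ) (q : ι),
      (T.symm (a, y) : EuclideanSpace ℝ ι) q
        = if h : p q then a ⟨q, h⟩ else y ⟨q, h⟩ := fun a y q => rfl
  -- block-l equivalence
  set e : {q : ι // p q} ≃ Fin d :=
    { toFun := fun q => q.1.2
      invFun := fun jj => ⟨(l, jj), rfl⟩
      left_inv := by rintro ⟨⟨m, jj⟩, h⟩; have h' : m = l := h; subst h'; rfl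
      right_inv := fun jj => rfl } with he
  set g : ({q : ι // p q} → ℝ) → EuclideanSpace ℝ (Fin d) := fun a =>
    (MeasurableEquiv.toLp 2 (Fin d → ℝ)).symm.symm
      ((MeasurableEquiv.piCongrLeft (fun _ : Fin d => ℝ) e) a) with hg
  have hgMP : MeasureTheory.MeasurePreserving g volume volume :=
    ((EuclideanSpace.volume_preserving_symm_measurableEquiv_toLp (Fin d)).symm
        (MeasurableEquiv.toLp 2 (Fin d → ℝ)).symm).comp
      (MeasureTheory.volume_measurePreserving_piCongrLeft (fun _ : Fin d => ℝ) e)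
  have hgval : ∀ (a : {q : ι // p q} → ℝ) (jj : Fin d), g a jj = a ⟨(l, jj), rfl⟩ := by
    intro a jj
    show (MeasurableEquiv.piCongrLeft (fun _ : Fin d => ℝ) e) a jj = _
    exact Equiv.piCongrLeft_apply_apply (P := fun _ : Fin d => ℝ) (e := e) a ⟨(l, jj), rfl⟩
  set Box : Set ({q : ι // ¬ p q} → ℝ) := Set.pi Set.univ (fun _ => Set.Icc (-B) B) with hBox
  set c1 := volume (Metric.ball (0 : EuclideanSpace ℝ (Fin d)) 1) with hc1
  set bnd := ENNReal.ofReal ((d : ℝ) * (2 * d * B + 4) ^ (d - 1) * (4 * t)) * c1 with hbnd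
  have hslice : ∀ y : {q : ι // ¬ p q} → ℝ,
      volume ((fun a => (a, y)) ⁻¹' (⇑T.symm ⁻¹' S)) ≤ Box.indicator (fun _ => bnd) y := by
    intro y
    by_cases hy : y ∈ Box
    · rw [Set.indicator_of_mem hy]
      set x₀ : EuclideanSpace ℝ ι := T.symm (0, y) with hx0
      have hblkfix : ∀ (a : {q : ι // p q} → ℝ) (m : Fin r), m ≠ l →
          blk (T.symm (a, y)) m = blk x₀ m := by
        intro a m hm
        ext jj
        show (T.symm (a, y) : EuclideanSpace ℝ ι) (m, jj)
          = (x₀ : EuclideanSpace ℝ ι) (m, jj)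
        rw [hx0, hTval, hTval, dif_neg hm, dif_neg hm]
      set R := ‖blk x₀ i - blk x₀ j‖ with hRdef
      set cc := blk x₀ k with hcc
      have hRnn : (0:ℝ) ≤ R := norm_nonneg _
      have hycoord : ∀ (q : ι) (hq : ¬ p q), |x₀ q| ≤ B := by
        intro q hq
        rw [hx0, hTval, dif_neg hq]
        have h1 := Set.mem_univ_pi.1 hy (⟨q, hq⟩ : {q : ι // ¬ p q})
        rw [Set.mem_Icc] at h1
        exact abs_le.2 h1
      have hRle : R ≤ 2 * d * B := by
        have hco : ∀ jj, |(blk x₀ i - blk x₀ j) jj| ≤ 2 * B := by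
          intro jj
          have e1 : (blk x₀ i - blk x₀ j) jj = x₀ (i, jj) - x₀ (j, jj) := rfl
          rw [e1]
          have b1 := hycoord (i, jj) (Ne.symm hli)
          have b2 := hycoord (j, jj) (Ne.symm hlj)
          calc |x₀ (i, jj) - x₀ (j, jj)| ≤ |x₀ (i, jj)| + |x₀ (j, jj)| := abs_sub _ _
            _ ≤ 2 * B := by linarith
        have := norm_le_of_coord hd (B := 2 * B) (by linarith) hco
        rw [hRdef]
        calc ‖blk x₀ i - blk x₀ j‖ ≤ (d : ℝ) * (2 * B) := this
          _ = 2 * d * B := by ring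
      have hincl : ((fun a => (a, y)) ⁻¹' (⇑T.symm ⁻¹' S)) ⊆
          g ⁻¹' (Metric.closedBall cc (R + 4 * t) \ Metric.ball cc R) := by
        intro a ha
        simp only [Set.mem_preimage] at ha ⊢
        obtain ⟨hco, h1, h2⟩ := ha
        have hbi : blk (T.symm (a, y)) i = blk x₀ i := hblkfix a i (Ne.symm hli)
        have hbj : blk (T.symm (a, y)) j = blk x₀ j := hblkfix a j (Ne.symm hlj)
        have hbk : blk (T.symm (a, y)) k = blk x₀ k := hblkfix a k (Ne.symm hlk)
        have hbl : blk (T.symm (a, y)) l = g a := by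
          ext jj
          show (T.symm (a, y) : EuclideanSpace ℝ ι) (l, jj) = g a jj
          rw [hTval, dif_pos rfl, hgval]
        rw [hbi, hbj, hbk, hbl] at h1 h2
        have hdist : ‖g a - cc‖ = ‖blk x₀ k - g a‖ := norm_sub_rev _ _
        constructor
        · rw [Metric.mem_closedBall, dist_eq_norm, hdist]
          exact le_trans h2 (by rw [hRdef])
        · rw [Metric.mem_ball, not_lt, dist_eq_norm, hdist]
          exact le_trans (le_of_eq hRdef) h1
      calc volume ((fun a => (a, y)) ⁻¹' (⇑T.symm ⁻¹' S))
          ≤ volume (g ⁻¹' (Metric.closedBall cc (R + 4 * t) \ Metric.ball cc R)) :=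
            measure_mono hincl
        _ = volume (Metric.closedBall cc (R + 4 * t) \ Metric.ball cc R) :=
            hgMP.measure_preimage
              ((measurableSet_closedBall.diff measurableSet_ball).nullMeasurableSet)
        _ ≤ ENNReal.ofReal ((R + 4 * t) ^ d - R ^ d) * c1 :=
            annulus_vol hd cc hRnn (by linarith)
        _ ≤ bnd := by
            rw [hbnd]
            apply mul_le_mul_left
            apply ENNReal.ofReal_le_ofReal
            have := pow_sub_pow_le_lin (A := 2 * d * B + 4) d
              hRnn (by linarith : R ≤ R + 4 * t) (by nlinarith : R + 4 * t ≤ 2 * d * B + 4)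
            calc (R + 4 * t) ^ d - R ^ d ≤ (d : ℝ) * (2 * d * B + 4) ^ (d - 1) * (R + 4 * t - R) := this
              _ = (d : ℝ) * (2 * d * B + 4) ^ (d - 1) * (4 * t) := by ring_nf
    · rw [Set.indicator_of_notMem hy]
      have hempty : ((fun a => (a, y)) ⁻¹' (⇑T.symm ⁻¹' S)) = ∅ := by
        ext a
        simp only [Set.mem_preimage, Set.mem_empty_iff_false, iff_false]
        intro ha
        apply hy
        intro qq _
        have h1 := ha.1 qq.1
        rw [hTval] at h1
        rw [dif_neg qq.2] at h1
        rw [Set.mem_Icc]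
        have h2 : y ⟨qq.1, qq.2⟩ = y qq := rfl
        rw [h2] at h1
        exact abs_le.1 h1
      rw [hempty, measure_empty]
  have hBoxm : MeasurableSet Box := MeasurableSet.univ_pi (fun _ => measurableSet_Icc)
  have hTm : MeasurableSet (⇑T.symm ⁻¹' S) := T.symm.measurable hS
  have hcard : Fintype.card {q : ι // ¬ p q} ≤ r * d := by
    calc Fintype.card {q : ι // ¬ p q} ≤ Fintype.card ι := Fintype.card_subtype_le _
      _ = r * d := by
          show Fintype.card (Fin r × Fin d) = r * d
          simp
  calc volume S = volume (⇑T.symm ⁻¹' S) := hvol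
    _ = ∫⁻ y, volume ((fun a => (a, y)) ⁻¹' (⇑T.symm ⁻¹' S)) ∂volume := by
        rw [MeasureTheory.Measure.volume_eq_prod]
        exact MeasureTheory.Measure.prod_apply_symm hTm
    _ ≤ ∫⁻ y, Box.indicator (fun _ => bnd) y ∂volume := MeasureTheory.lintegral_mono hslice
    _ = bnd * volume Box := MeasureTheory.lintegral_indicator_const hBoxm bnd
    _ ≤ bnd * ENNReal.ofReal ((2 * B) ^ (r * d)) := by
        apply mul_le_mul_right
        have h1 : volume Box = (ENNReal.ofReal (2 * B)) ^ (Fintype.card {q : ι // ¬ p q}) := by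
          rw [hBox, MeasureTheory.volume_pi_pi]
          have h2 : ∀ _q : {q : ι // ¬ p q},
              volume (Set.Icc (-B) B) = ENNReal.ofReal (2 * B) := by
            intro _q
            rw [Real.volume_Icc]
            congr 1
            ring
          rw [Finset.prod_congr rfl (fun q _ => h2 q), Finset.prod_const, Finset.card_univ]
        rw [h1]
        calc (ENNReal.ofReal (2 * B)) ^ (Fintype.card {q : ι // ¬ p q})
            ≤ (ENNReal.ofReal (2 * B)) ^ (r * d) :=
              pow_le_pow_right₀ (ENNReal.one_le_ofReal.2 (by linarith : (1:ℝ) ≤ 2 * B)) hcard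
          _ = ENNReal.ofReal ((2 * B) ^ (r * d)) :=
              (ENNReal.ofReal_pow (by linarith : (0:ℝ) ≤ 2 * B) _).symm
    _ = ENNReal.ofReal ((2 * B) ^ (r * d)) * bnd := mul_comm _ _
    _ = ENNReal.ofReal ((2 * B) ^ (r * d)) *
        (ENNReal.ofReal ((d : ℝ) * (2 * d * B + 4) ^ (d - 1) * (4 * t)) * c1) := by rw [hbnd]

end Core

section Rho

lemma vr_nonneg {d r : ℕ} (J : Finset (Fin r)) (x : EuclideanSpace ℝ (Fin r × Fin d)) :
    0 ≤ vietorisRips J x := NNReal.coe_nonneg _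

lemma rho_gt {d r : ℕ} (hr : 2 ≤ r) {M : Set (EuclideanSpace ℝ (Fin d))}
    (hMb : Bornology.IsBounded M) (hMne : M.Nonempty)
    {x : EuclideanSpace ℝ (Fin r × Fin d)} (hx : x ∈ confSet M r) {t : ℝ} (ht : 0 ≤ t)
    (hno : ∀ i j k l : Fin r, l ≠ k → l ≠ i → l ≠ j →
      ¬(‖blk x i - blk x j‖ ≤ ‖blk x k - blk x l‖ ∧
        ‖blk x k - blk x l‖ ≤ ‖blk x i - blk x j‖ + 4 * t)) :
    t < rho M vietorisRips x := by
  classical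
  obtain ⟨m₀, hm₀⟩ := hMne
  obtain ⟨Bd, hBd⟩ := Metric.isBounded_iff.1 hMb
  -- step 1 : gap property
  have claim1 : ∀ a b c ee : Fin r, ‖blk x a - blk x b‖ < ‖blk x c - blk x ee‖ →
      ‖blk x a - blk x b‖ + 4 * t < ‖blk x c - blk x ee‖ := by
    intro a b c ee h
    have hec : ee ≠ c := by
      intro hh
      subst hh
      rw [sub_self, norm_zero] at h
      exact absurd h (not_lt.2 (norm_nonneg _))
    by_cases hea : ee = a
    · by_cases hca : c = a
      · exact absurd (hea.trans hca.symm) hec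
      · by_cases hcb : c = b
        · subst hcb; subst hea
          rw [norm_sub_rev (blk x c)] at h
          exact absurd h (lt_irrefl _)
        · have hth := hno a b ee c (Ne.symm hec) hca hcb
          rw [norm_sub_rev (blk x ee)] at hth
          push_neg at hth
          exact hth h.le
    · by_cases heb : ee = b
      · by_cases hca : c = a
        · subst hca; subst heb
          exact absurd h (lt_irrefl _)
        · by_cases hcb : c = b
          · exact absurd (heb.trans hcb.symm) hec
          · have hth := hno a b ee c (Ne.symm hec) hca hcb
            rw [norm_sub_rev (blk x ee)] at hth
            push_neg at hth
            exact hth h.le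
      · have hth := hno a b c ee hec hea heb
        push_neg at hth
        exact hth h.le
  -- step 2 : two distinct points
  have h01 : (1 : ℕ) < r := lt_of_lt_of_le one_lt_two hr
  set i0 : Fin r := ⟨0, lt_of_lt_of_le (by norm_num) hr⟩ with hi0
  set i1 : Fin r := ⟨1, h01⟩ with hi1
  have hi01 : i1 ≠ i0 := by
    intro hh
    have := congrArg Fin.val hh
    simp [hi0, hi1] at this
  have hD : 4 * t < ‖blk x i0 - blk x i1‖ := by
    have hth := hno i0 i0 i0 i1 hi01 hi01 hi01
    push_neg at hth
    have := hth (by rw [sub_self, norm_zero]; exact norm_nonneg _)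
    rw [sub_self, norm_zero] at this
    linarith
  have hDpos : 0 < ‖blk x i0 - blk x i1‖ := lt_of_le_of_lt (by linarith) hD
  -- the set defining rho
  set SS : Set ℝ := {ε : ℝ | 0 ≤ ε ∧ ∀ y ∈ confSet M r,
    (∀ i, ‖blk y i - blk x i‖ ≤ ε) →
    ∀ J J' : Finset (Fin r), J.Nonempty → J'.Nonempty →
      vietorisRips J x < vietorisRips J' x → vietorisRips J y < vietorisRips J' y} with hSS
  have hrho : rho M vietorisRips x = sSup SS := rfl
  -- bounded above
  have hbdd : BddAbove SS := by
    refine ⟨Bd, fun ε hε => ?_⟩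
    by_contra hεB
    push_neg at hεB
    set y : EuclideanSpace ℝ (Fin r × Fin d) := WithLp.toLp 2 (fun q : Fin r × Fin d => m₀ q.2) with hy
    have hblky : ∀ m : Fin r, blk y m = m₀ := fun m => rfl
    have hyM : y ∈ confSet M r := fun m => by rw [hblky]; exact hm₀
    have hynear : ∀ m, ‖blk y m - blk x m‖ ≤ ε := by
      intro m
      rw [hblky]
      have : dist m₀ (blk x m) ≤ Bd := hBd hm₀ (hx m)
      rw [dist_eq_norm] at this
      linarith
    have hJlt : vietorisRips {i0} x < vietorisRips {i0, i1} x := by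
      have h1 : vietorisRips {i0} x = 0 := by
        obtain ⟨a, ha, b, hb, hab⟩ := vr_exists (Finset.singleton_nonempty i0) x
        rw [Finset.mem_singleton] at ha hb
        rw [hab, ha, hb, sub_self, norm_zero]
      have h2 : ‖blk x i0 - blk x i1‖ ≤ vietorisRips {i0, i1} x :=
        vr_le (Finset.mem_insert_self _ _)
          (Finset.mem_insert_of_mem (Finset.mem_singleton_self _)) x
      rw [h1]
      exact lt_of_lt_of_le hDpos h2
    have hconc := hε.2 y hyM hynear {i0} {i0, i1}
      (Finset.singleton_nonempty i0) ⟨i0, Finset.mem_insert_self _ _⟩ hJlt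
    have hcy : vietorisRips ({i0, i1} : Finset (Fin r)) y = 0 := by
      obtain ⟨a, ha, b, hb, hab⟩ := vr_exists (J := ({i0, i1} : Finset (Fin r)))
        ⟨i0, Finset.mem_insert_self _ _⟩ y
      rw [hab, hblky, hblky, sub_self, norm_zero]
    rw [hcy] at hconc
    exact absurd hconc (not_lt.2 (vr_nonneg _ _))
  -- the gap δ
  set s : Finset ((Fin r × Fin r) × Fin r × Fin r) := Finset.univ.filter
    (fun v => ‖blk x v.1.1 - blk x v.1.2‖ < ‖blk x v.2.1 - blk x v.2.2‖) with hs
  have hsne : s.Nonempty := by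
    refine ⟨((i0, i0), (i0, i1)), Finset.mem_filter.2 ⟨Finset.mem_univ _, ?_⟩⟩
    simpa [sub_self] using hDpos
  obtain ⟨δ, hδpos, hδle⟩ : ∃ δ : ℝ, 0 < δ ∧ ∀ v ∈ s,
      δ ≤ ‖blk x v.2.1 - blk x v.2.2‖ - ‖blk x v.1.1 - blk x v.1.2‖ - 4 * t := by
    refine ⟨s.inf' hsne
      (fun v => ‖blk x v.2.1 - blk x v.2.2‖ - ‖blk x v.1.1 - blk x v.1.2‖ - 4 * t), ?_,
      fun v hv => Finset.inf'_le _ hv⟩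
    rw [Finset.lt_inf'_iff]
    intro v hv
    have := claim1 v.1.1 v.1.2 v.2.1 v.2.2 (Finset.mem_filter.1 hv).2
    linarith
  have hεmem : t + δ / 8 ∈ SS := by
    constructor
    · linarith
    · intro y hy hnear J J' hJ hJ' hlt
      obtain ⟨a, ha, b, hb, hab⟩ := vr_exists hJ x
      obtain ⟨c, hc, ee, hee, hce⟩ := vr_exists hJ' x
      have hlt' : ‖blk x a - blk x b‖ < ‖blk x c - blk x ee‖ := by
        rw [← hab, ← hce]; exact hlt
      have hmem : ((a, b), (c, ee)) ∈ s := Finset.mem_filter.2 ⟨Finset.mem_univ _, hlt'⟩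
      have hgap := hδle _ hmem
      simp only at hgap
      have h1 : vietorisRips J y ≤ vietorisRips J x + 2 * (t + δ / 8) := vr_pert hnear hJ
      have h2 : vietorisRips J' x ≤ vietorisRips J' y + 2 * (t + δ / 8) :=
        vr_pert (fun m => by rw [norm_sub_rev]; exact hnear m) hJ'
      rw [hab] at h1
      rw [hce] at h2
      linarith
  have : t + δ / 8 ≤ rho M vietorisRips x := by
    rw [hrho]
    exact le_csSup hbdd hεmem
  linarith

end Rho

theorem stmt_3 {d r : ℕ} (hd : 1 ≤ d) (hr : 2 ≤ r)
    (M : Set (EuclideanSpace ℝ (Fin d)))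
    (hMcomp : IsCompact M) (hMconv : Convex ℝ M) (hMint : (interior M).Nonempty) :
    ∃ C > 0, ∀ t ∈ Set.Icc (0 : ℝ) 1,
      volume {x | x ∈ confSet M r ∧ rho M vietorisRips x ≤ t} ≤
        ENNReal.ofReal (C * t) := by
  classical
  have hMne : M.Nonempty := ⟨hMint.choose, interior_subset hMint.choose_spec⟩
  obtain ⟨B₀, hB₀⟩ := hMcomp.isBounded.subset_closedBall 0
  set B : ℝ := max B₀ 1 with hBdef
  have hB : 1 ≤ B := le_max_right _ _
  have hB0 : 0 ≤ B := by linarith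
  have hMB : ∀ v ∈ M, ‖v‖ ≤ B := by
    intro v hv
    have := hB₀ hv
    rw [Metric.mem_closedBall, dist_zero_right] at this
    exact this.trans (le_max_left _ _)
  set c1r : ℝ := (volume (Metric.ball (0 : EuclideanSpace ℝ (Fin d)) 1)).toReal with hc1r
  have hc1rnn : 0 ≤ c1r := ENNReal.toReal_nonneg
  set base : ℝ := (r : ℝ) ^ 4 * ((2 * B) ^ (r * d) *
      ((d : ℝ) * (2 * d * B + 4) ^ (d - 1) * 4 * c1r)) with hbase
  have hbasenn : 0 ≤ base := by positivity
  refine ⟨base + 1, by linarith, ?_⟩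
  rintro t ⟨ht0, ht1⟩
  set A : (Fin r × Fin r) × Fin r × Fin r → Set (EuclideanSpace ℝ (Fin r × Fin d)) :=
    fun v => if v.2.2 ≠ v.2.1 ∧ v.2.2 ≠ v.1.1 ∧ v.2.2 ≠ v.1.2 then
      {x | (∀ q, |x q| ≤ B) ∧
        ‖blk x v.1.1 - blk x v.1.2‖ ≤ ‖blk x v.2.1 - blk x v.2.2‖ ∧
        ‖blk x v.2.1 - blk x v.2.2‖ ≤ ‖blk x v.1.1 - blk x v.1.2‖ + 4 * t}
      else ∅ with hA
  have hcover : {x | x ∈ confSet M r ∧ rho M vietorisRips x ≤ t} ⊆ ⋃ v, A v := by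
    rintro x ⟨hxM, hxrho⟩
    by_contra hnotin
    rw [Set.mem_iUnion] at hnotin
    push_neg at hnotin
    have hno : ∀ i j k l : Fin r, l ≠ k → l ≠ i → l ≠ j →
        ¬(‖blk x i - blk x j‖ ≤ ‖blk x k - blk x l‖ ∧
          ‖blk x k - blk x l‖ ≤ ‖blk x i - blk x j‖ + 4 * t) := by
      intro i j k l h1 h2 h3 hcontra
      apply hnotin ((i, j), (k, l))
      rw [hA]
      simp only
      rw [if_pos ⟨h1, h2, h3⟩]
      refine ⟨?_, hcontra.1, hcontra.2⟩
      intro q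
      have h4 : |x q| = |blk x q.1 q.2| := rfl
      rw [h4]
      exact (coord_abs_le_norm (blk x q.1) q.2).trans (hMB _ (hxM q.1))
    exact absurd hxrho (not_le.2 (rho_gt hr hMcomp.isBounded hMne hxM ht0 hno))
  have hAvol : ∀ v, volume (A v) ≤
      ENNReal.ofReal ((2 * B) ^ (r * d)) *
        (ENNReal.ofReal ((d : ℝ) * (2 * d * B + 4) ^ (d - 1) * (4 * t)) *
          volume (Metric.ball (0 : EuclideanSpace ℝ (Fin d)) 1)) := by
    intro v
    rw [hA]
    simp only
    by_cases hv : v.2.2 ≠ v.2.1 ∧ v.2.2 ≠ v.1.1 ∧ v.2.2 ≠ v.1.2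
    · rw [if_pos hv]
      exact quad_vol hd hB ht0 ht1 v.1.1 v.1.2 v.2.1 v.2.2 hv.1 hv.2.1 hv.2.2
    · rw [if_neg hv, measure_empty]
      exact zero_le
  have hcard : (Fintype.card ((Fin r × Fin r) × Fin r × Fin r) : ENNReal) = ((r : ENNReal)) ^ 4 := by
    simp only [Fintype.card_prod, Fintype.card_fin]
    push_cast
    ring
  calc volume {x | x ∈ confSet M r ∧ rho M vietorisRips x ≤ t}
      ≤ volume (⋃ v, A v) := measure_mono hcover
    _ ≤ ∑' v, volume (A v) := measure_iUnion_le _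
    _ ≤ ∑' _v : (Fin r × Fin r) × Fin r × Fin r,
          (ENNReal.ofReal ((2 * B) ^ (r * d)) *
            (ENNReal.ofReal ((d : ℝ) * (2 * d * B + 4) ^ (d - 1) * (4 * t)) *
              volume (Metric.ball (0 : EuclideanSpace ℝ (Fin d)) 1))) :=
        ENNReal.tsum_le_tsum hAvol
    _ = (Fintype.card ((Fin r × Fin r) × Fin r × Fin r) : ENNReal) *
          (ENNReal.ofReal ((2 * B) ^ (r * d)) *
            (ENNReal.ofReal ((d : ℝ) * (2 * d * B + 4) ^ (d - 1) * (4 * t)) *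
              volume (Metric.ball (0 : EuclideanSpace ℝ (Fin d)) 1))) := by
        rw [tsum_fintype, Finset.sum_const, Finset.card_univ, nsmul_eq_mul]
    _ ≤ ENNReal.ofReal ((base + 1) * t) := by
        have hball : volume (Metric.ball (0 : EuclideanSpace ℝ (Fin d)) 1) =
            ENNReal.ofReal c1r := by
          rw [hc1r, ENNReal.ofReal_toReal measure_ball_lt_top.ne]
        rw [hball, hcard]
        have hr4 : ((r : ENNReal)) ^ 4 = ENNReal.ofReal ((r : ℝ) ^ 4) := by
          rw [ENNReal.ofReal_pow (by positivity), ENNReal.ofReal_natCast]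
        rw [hr4, ← ENNReal.ofReal_mul (by positivity),
          ← ENNReal.ofReal_mul (by positivity), ← ENNReal.ofReal_mul (by positivity)]
        apply ENNReal.ofReal_le_ofReal
        have hexp : (r : ℝ) ^ 4 * ((2 * B) ^ (r * d) *
            ((d : ℝ) * (2 * d * B + 4) ^ (d - 1) * (4 * t) * c1r)) = base * t := by
          rw [hbase]; ring
        rw [hexp]
        nlinarith
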